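/- arXiv:2409.17614 — 4 statements merged into one kernel-verified Lean document; each statement's English description precedes it below -/
import Mathlib

section
/- For any graph G, the (α(G)−1)-bounded chromatic number satisfies χ_{α(G)−1}(G) ≤ χ(G) + X, where X is the number of independent sets of G of size exactly α(G). -/
open Finset

/-- The `t`-bounded chromatic number: the least number of colours in a proper colouring
in which every colour class has at most `t` vertices. -/
noncomputable def boundedChromaticNumber {V : Type*} [Fintype V] (G : SimpleGraph V)
    (t : ℕ) : ℕ :=
  sInf {k : ℕ | ∃ c : V → Fin k,
    (∀ v w, G.Adj v w → c v ≠ c w) ∧ ∀ i : Fin k, Set.ncard {v | c v = i} ≤ t}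

/-- The independence number of `G`. -/
noncomputable def indepNumber {V : Type*} [Fintype V] (G : SimpleGraph V) : ℕ :=
  sSup {a : ℕ | ∃ s : Finset V, s.card = a ∧ Gᶜ.IsClique (s : Set V)}

/-- `χ_{α(G)-1}(G) ≤ χ(G) + X`, where `X` is the number of independent sets
of size exactly `α(G)`. -/
theorem boundedChromatic_le_chromatic_add {V : Type*} [Fintype V] (G : SimpleGraph V) :
    (boundedChromaticNumber G (indepNumber G - 1) : ℕ∞) ≤
      G.chromaticNumber +
        Set.ncard {s : Finset V | s.card = indepNumber G ∧ Gᶜ.IsClique (s : Set V)} := by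
  classical
  set α := indepNumber G with hαdef
  have hbdd : BddAbove {a : ℕ | ∃ s : Finset V, s.card = a ∧ Gᶜ.IsClique (s : Set V)} :=
    ⟨Fintype.card V, fun a ⟨s, hs, _⟩ => hs ▸ (by simpa using Finset.card_le_univ s)⟩
  have hle : ∀ s : Finset V, Gᶜ.IsClique (s : Set V) → s.card ≤ α :=
    fun s hs => le_csSup hbdd ⟨s, rfl, hs⟩
  by_cases hα2 : 2 ≤ α
  case neg =>
    -- small independence number: the bounded chromatic number is 0
    have h0 : boundedChromaticNumber G (α - 1) = 0 := by
      by_cases hV : Nonempty V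
      · -- then α = 1 or α = 0 is impossible... α ≥ 1, so α - 1 = 0 and the defining set is empty
        obtain ⟨v⟩ := hV
        have hα1 : 1 ≤ α := le_csSup hbdd ⟨{v}, by simp, by simp [SimpleGraph.isClique_iff,
          Set.Pairwise]⟩
        have hαeq : α = 1 := by omega
        have : {k : ℕ | ∃ c : V → Fin k,
            (∀ v w, G.Adj v w → c v ≠ c w) ∧ ∀ i : Fin k, Set.ncard {v | c v = i} ≤ α - 1} = ∅ := by
          ext k
          simp only [Set.mem_setOf_eq, Set.mem_empty_iff_false, iff_false]
          rintro ⟨c, -, hsmall⟩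
          have := hsmall (c v)
          rw [hαeq] at this
          simp only [Nat.sub_self, Nat.le_zero] at this
          have hvmem : v ∈ {w | c w = c v} := rfl
          have := Set.ncard_eq_zero (Set.toFinite _) |>.mp this
          rw [this] at hvmem
          exact hvmem
        rw [boundedChromaticNumber, this, Nat.sInf_empty]
      · -- V empty
        rw [not_nonempty_iff] at hV
        apply Nat.eq_zero_of_le_zero
        apply Nat.sInf_le
        refine ⟨fun v => (hV.false v).elim, fun v w _ => (hV.false v).elim, fun i => ?_⟩
        have hz : ∀ s : Set V, s.ncard = 0 := fun s => by
          rw [Set.eq_empty_of_isEmpty s]; exact Set.ncard_empty V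
        simp [hz]
    rw [h0]
    simp
  case pos =>
  -- main case : α ≥ 2
  have hcol : G.Colorable (ENat.toNat G.chromaticNumber) :=
    G.colorable_chromaticNumber_of_fintype
  set n := ENat.toNat G.chromaticNumber with hndef
  have hne : G.chromaticNumber ≠ ⊤ :=
    SimpleGraph.chromaticNumber_ne_top_iff_exists.mpr ⟨_, G.colorable_of_fintype⟩
  have hχ : G.chromaticNumber = (n : ℕ∞) := (ENat.coe_toNat hne).symm
  obtain ⟨C⟩ := hcol
  -- colour classes
  set cls : Fin n → Finset V := fun i => univ.filter (fun v => C v = i) with hclsdef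
  have hmemcls : ∀ i v, v ∈ cls i ↔ C v = i := by intro i v; simp [hclsdef]
  have hclsindep : ∀ i, Gᶜ.IsClique ((cls i : Set V)) := by
    intro i v hv w hw hne'
    rw [SimpleGraph.compl_adj]
    refine ⟨hne', fun hadj => C.valid hadj ?_⟩
    simp only [Finset.mem_coe, hmemcls] at hv hw
    rw [hv, hw]
  have hclscard : ∀ i, (cls i).card ≤ α := fun i => hle _ (hclsindep i)
  set Big : Finset (Fin n) := univ.filter (fun i => (cls i).card = α) with hBigdef
  set m := Big.card with hmdef
  set S : Set (Finset V) := {s : Finset V | s.card = α ∧ Gᶜ.IsClique (s : Set V)} with hSdef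
  have hSncard : S.ncard = S.toFinset.card := Set.ncard_eq_toFinset_card' S
  -- m ≤ X
  have hmX : m ≤ S.ncard := by
    rw [hSncard]
    apply Finset.card_le_card_of_injOn cls
    · intro i hi
      rw [Finset.mem_coe, Set.mem_toFinset]
      exact ⟨(Finset.mem_filter.mp hi).2, hclsindep i⟩
    · intro i hi j hj hij
      have hipos : 0 < (cls i).card := by
        have := (Finset.mem_filter.mp hi).2; omega
      obtain ⟨v, hv⟩ := Finset.card_pos.mp hipos
      have h1 : C v = i := (hmemcls i v).mp hv
      have h2 : C v = j := (hmemcls j v).mp (hij ▸ hv)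
      rw [← h1, h2]
  -- nonempty classes in Big, pick a representative
  have hV : Nonempty V := by
    have hne' : {a : ℕ | ∃ s : Finset V, s.card = a ∧ Gᶜ.IsClique (s : Set V)}.Nonempty :=
      ⟨0, ∅, by simp, by simp⟩
    obtain ⟨s, hs, -⟩ := Nat.sSup_mem hne' hbdd
    have hs' : s.card = α := hs
    obtain ⟨v, -⟩ := Finset.card_pos.mp (by omega : 0 < s.card)
    exact ⟨v⟩
  set vsel : Fin n → V := fun i => if h : (cls i).Nonempty then h.choose else Classical.arbitrary V
    with hvseldef
  have hvsel : ∀ i ∈ Big, vsel i ∈ cls i := by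
    intro i hi
    have hipos : (cls i).Nonempty := Finset.card_pos.mp (by
      have := (Finset.mem_filter.mp hi).2; omega)
    simp only [hvseldef, dif_pos hipos]
    exact hipos.choose_spec
  set e := Big.orderIsoOfFin (rfl : Big.card = m) with hedef
  -- the new colouring
  set c' : V → Fin (n + m) := fun v =>
    if h : C v ∈ Big ∧ v = vsel (C v) then Fin.natAdd n (e.symm ⟨C v, h.1⟩)
    else Fin.castAdd m (C v) with hc'def
  have hproper : ∀ v w, G.Adj v w → c' v ≠ c' w := by
    intro v w hadj heq
    have hCvw : C v ≠ C w := C.valid hadj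
    simp only [hc'def] at heq
    split_ifs at heq with h1 h2 h2
    · have : (e.symm ⟨C v, h1.1⟩ : Fin m) = e.symm ⟨C w, h2.1⟩ := by
        have := congrArg Fin.val heq
        simp only [Fin.natAdd] at this
        exact Fin.ext (by omega)
      have := congrArg (fun x => ((e x : {x // x ∈ Big}) : Fin n)) this
      simp only [OrderIso.apply_symm_apply] at this
      exact hCvw this
    · have := congrArg Fin.val heq
      simp only [Fin.natAdd, Fin.castAdd, Fin.castLE] at this
      have := (C w).isLt
      omega
    · have := congrArg Fin.val heq
      simp only [Fin.natAdd, Fin.castAdd, Fin.castLE] at this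
      have := (C v).isLt
      omega
    · have := congrArg Fin.val heq
      simp only [Fin.castAdd, Fin.castLE] at this
      exact hCvw (Fin.ext this)
  have hbound : ∀ i : Fin (n + m), Set.ncard {v | c' v = i} ≤ α - 1 := by
    intro i
    have hset : {v | c' v = i} = ↑(univ.filter (fun v => c' v = i)) := by
      ext v; simp
    rw [hset, Set.ncard_coe_finset]
    by_cases hi : (i : ℕ) < n
    · set j : Fin n := ⟨i, hi⟩ with hjdef
      have hsub : ∀ v, c' v = i → v ∈ cls j ∧ (j ∈ Big → v ≠ vsel j) := by
        intro v hv
        simp only [hc'def] at hv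
        split_ifs at hv with h1
        · exfalso
          have := congrArg Fin.val hv
          simp only [Fin.natAdd] at this
          omega
        · have hCj : C v = j := by
            have := congrArg Fin.val hv
            simp only [Fin.castAdd, Fin.castLE] at this
            exact Fin.ext this
          refine ⟨(hmemcls j v).mpr hCj, fun hjB hveq => h1 ?_⟩
          rw [hCj]
          exact ⟨hjB, hveq⟩
      by_cases hjB : j ∈ Big
      · have hsub' : univ.filter (fun v => c' v = i) ⊆ (cls j).erase (vsel j) := by
          intro v hv
          rw [Finset.mem_filter] at hv
          obtain ⟨hm1, hm2⟩ := hsub v hv.2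
          exact Finset.mem_erase.mpr ⟨hm2 hjB, hm1⟩
        calc (univ.filter (fun v => c' v = i)).card ≤ ((cls j).erase (vsel j)).card :=
              Finset.card_le_card hsub'
          _ = (cls j).card - 1 := Finset.card_erase_of_mem (hvsel j hjB)
          _ = α - 1 := by rw [(Finset.mem_filter.mp hjB).2]
      · have hjcard : (cls j).card ≠ α := by
          intro h
          exact hjB (Finset.mem_filter.mpr ⟨Finset.mem_univ j, h⟩)
        have h1 : (univ.filter (fun v => c' v = i)).card ≤ (cls j).card :=
          Finset.card_le_card (fun v hv => (hsub v (Finset.mem_filter.mp hv).2).1)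
        have h2 := hclscard j
        omega
    · -- big new colour: at most one vertex
      have h1 : (univ.filter (fun v => c' v = i)).card ≤ 1 := by
        rw [Finset.card_le_one]
        intro v hv w hw
        rw [Finset.mem_filter] at hv hw
        have hv' := hv.2; have hw' := hw.2
        simp only [hc'def] at hv' hw'
        split_ifs at hv' with h1'
        swap
        · exfalso
          have := congrArg Fin.val hv'
          simp only [Fin.castAdd, Fin.castLE] at this
          have := (C v).isLt
          omega
        split_ifs at hw' with h2'
        swap
        · exfalso
          have := congrArg Fin.val hw'
          simp only [Fin.castAdd, Fin.castLE] at this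
          have := (C w).isLt
          omega
        have heq : (e.symm ⟨C v, h1'.1⟩ : Fin m) = e.symm ⟨C w, h2'.1⟩ := by
          have hv'' := congrArg Fin.val hv'
          have hw'' := congrArg Fin.val hw'
          simp only [Fin.natAdd] at hv'' hw''
          exact Fin.ext (by omega)
        have := congrArg (fun x => ((e x : {x // x ∈ Big}) : Fin n)) heq
        simp only [OrderIso.apply_symm_apply] at this
        rw [h1'.2, h2'.2, this]
      omega
  -- conclusion
  have hmem : n + m ∈ {k : ℕ | ∃ c : V → Fin k,
      (∀ v w, G.Adj v w → c v ≠ c w) ∧ ∀ i : Fin k, Set.ncard {v | c v = i} ≤ α - 1} :=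
    ⟨c', hproper, hbound⟩
  have hfin : boundedChromaticNumber G (α - 1) ≤ n + m := Nat.sInf_le hmem
  rw [hχ]
  have : boundedChromaticNumber G (α - 1) ≤ n + S.ncard := by omega
  calc (boundedChromaticNumber G (α - 1) : ℕ∞) ≤ ((n + S.ncard : ℕ) : ℕ∞) :=
        Nat.cast_le.mpr this
    _ = (n : ℕ∞) + (S.ncard : ℕ∞) := by push_cast; ring
end

section
/- Let k ≥ 1 and let π, π' be ordered partitions of [n] into k parts each, all parts of size at least 2, and suppose π and π' have exactly ℓ parts in common (as sets). Then in G(n,1/2), P(π and π' are both cocolourings) ≤ 2^{2k−ℓ} · P(π and π' are both proper colourings). -/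
noncomputable def unifProb (n : ℕ) (S : Set (SimpleGraph (Fin n))) : ℝ :=
  (S.ncard : ℝ) / 2 ^ n.choose 2

def IsOrderedPartition (n k : ℕ) (π : Fin k → Finset (Fin n)) : Prop :=
  (∀ i j, i ≠ j → Disjoint (π i) (π j)) ∧
    (∀ v : Fin n, ∃ i, v ∈ π i) ∧ ∀ i, 2 ≤ (π i).card

/-- If `π, π'` are ordered partitions of `[n]` into `k` parts of size at least 2 with exactly
`ℓ` parts in common, then
`P(π and π' are both cocolourings) ≤ 2^(2k-ℓ) · P(π and π' are both colourings)`. -/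
theorem prob_pair_cocolouring_le (n k ℓ : ℕ) (hk : 1 ≤ k)
    (π π' : Fin k → Finset (Fin n))
    (hπ : IsOrderedPartition n k π) (hπ' : IsOrderedPartition n k π')
    (hℓ : ℓ = Set.ncard {s : Finset (Fin n) | (∃ i, π i = s) ∧ ∃ j, π' j = s}) :
    unifProb n {G | (∀ i, G.IsClique (π i : Set (Fin n)) ∨ Gᶜ.IsClique (π i : Set (Fin n))) ∧
        ∀ j, G.IsClique (π' j : Set (Fin n)) ∨ Gᶜ.IsClique (π' j : Set (Fin n))} ≤
      2 ^ (2 * k - ℓ) *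
        unifProb n {G | (∀ i, Gᶜ.IsClique (π i : Set (Fin n))) ∧
          ∀ j, Gᶜ.IsClique (π' j : Set (Fin n))} := by
  classical
  set C : Set (SimpleGraph (Fin n)) :=
    {G | (∀ i, G.IsClique (π i : Set (Fin n)) ∨ Gᶜ.IsClique (π i : Set (Fin n))) ∧
        ∀ j, G.IsClique (π' j : Set (Fin n)) ∨ Gᶜ.IsClique (π' j : Set (Fin n))} with hCdef
  set I : Set (SimpleGraph (Fin n)) :=
    {G | (∀ i, Gᶜ.IsClique (π i : Set (Fin n))) ∧
          ∀ j, Gᶜ.IsClique (π' j : Set (Fin n))} with hIdef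
  -- the "inside a part" relation
  set ins : Fin n → Fin n → Prop := fun u v =>
    (∃ i, u ∈ π i ∧ v ∈ π i) ∨ (∃ j, u ∈ π' j ∧ v ∈ π' j) with hins
  -- pattern events
  set A : ((Fin k → Bool) × (Fin k → Bool)) → Set (SimpleGraph (Fin n)) := fun P =>
    {G | (∀ i, (P.1 i = true → G.IsClique (π i : Set (Fin n))) ∧
            (P.1 i = false → Gᶜ.IsClique (π i : Set (Fin n)))) ∧
         (∀ j, (P.2 j = true → G.IsClique (π' j : Set (Fin n))) ∧
            (P.2 j = false → Gᶜ.IsClique (π' j : Set (Fin n))))} with hA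
  set adm : Finset ((Fin k → Bool) × (Fin k → Bool)) :=
    Finset.univ.filter (fun P => ∀ i j, π i = π' j → P.1 i = P.2 j) with hadm
  -- in a pattern event, adjacency inside parts is determined by the pattern
  have adjdet : ∀ P, ∀ G ∈ A P, ∀ u v : Fin n, u ≠ v →
      (∀ i, u ∈ π i → v ∈ π i → (G.Adj u v ↔ P.1 i = true)) ∧
      (∀ j, u ∈ π' j → v ∈ π' j → (G.Adj u v ↔ P.2 j = true)) := by
    intro P G hG u v huv
    constructor
    · intro i hu hv
      cases hPi : P.1 i with
      | true =>
        simp only [iff_true]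
        exact (hG.1 i).1 hPi (Finset.mem_coe.2 hu) (Finset.mem_coe.2 hv) huv
      | false =>
        simp only [Bool.false_eq_true, iff_false]
        have := (hG.1 i).2 hPi (Finset.mem_coe.2 hu) (Finset.mem_coe.2 hv) huv
        exact (SimpleGraph.compl_adj G u v).1 this |>.2
    · intro j hu hv
      cases hPj : P.2 j with
      | true =>
        simp only [iff_true]
        exact (hG.2 j).1 hPj (Finset.mem_coe.2 hu) (Finset.mem_coe.2 hv) huv
      | false =>
        simp only [Bool.false_eq_true, iff_false]
        have := (hG.2 j).2 hPj (Finset.mem_coe.2 hu) (Finset.mem_coe.2 hv) huv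
        exact (SimpleGraph.compl_adj G u v).1 this |>.2
  -- each pattern event is at most as large as the independent event
  have stepC : ∀ P, (A P).ncard ≤ I.ncard := by
    intro P
    set Φ : SimpleGraph (Fin n) → SimpleGraph (Fin n) := fun G =>
      { Adj := fun u v => G.Adj u v ∧ ¬ ins u v
        symm := by
          refine ⟨fun u v h => ?_⟩
          refine ⟨G.adj_symm h.1, fun hi => h.2 ?_⟩
          rcases hi with ⟨i, h1, h2⟩ | ⟨j, h1, h2⟩
          · exact Or.inl ⟨i, h2, h1⟩
          · exact Or.inr ⟨j, h2, h1⟩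
        loopless := ⟨fun u h => G.loopless.irrefl u h.1⟩ } with hΦ
    have himg : Φ '' (A P) ⊆ I := by
      rintro - ⟨G, -, rfl⟩
      constructor
      · intro i
        rw [SimpleGraph.isClique_iff]
        intro u hu v hv huv
        rw [SimpleGraph.compl_adj]
        exact ⟨huv, fun h => h.2 (Or.inl ⟨i, Finset.mem_coe.1 hu, Finset.mem_coe.1 hv⟩)⟩
      · intro j
        rw [SimpleGraph.isClique_iff]
        intro u hu v hv huv
        rw [SimpleGraph.compl_adj]
        exact ⟨huv, fun h => h.2 (Or.inr ⟨j, Finset.mem_coe.1 hu, Finset.mem_coe.1 hv⟩)⟩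
    have hinj : Set.InjOn Φ (A P) := by
      intro G hG G' hG' hEq
      ext u v
      by_cases huv : u = v
      · subst huv; simp
      by_cases hiv : ins u v
      · rcases hiv with ⟨i, hu, hv⟩ | ⟨j, hu, hv⟩
        · rw [(adjdet P G hG u v huv).1 i hu hv, (adjdet P G' hG' u v huv).1 i hu hv]
        · rw [(adjdet P G hG u v huv).2 j hu hv, (adjdet P G' hG' u v huv).2 j hu hv]
      · have h2 : (Φ G).Adj u v ↔ (Φ G').Adj u v := by rw [hEq]
        simp only [hΦ] at h2
        constructor
        · intro h; exact (h2.1 ⟨h, hiv⟩).1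
        · intro h; exact (h2.2 ⟨h, hiv⟩).1
    calc (A P).ncard = (Φ '' (A P)).ncard := (Set.ncard_image_of_injOn hinj).symm
      _ ≤ I.ncard := Set.ncard_le_ncard himg I.toFinite
  -- the cocolouring event is covered by admissible pattern events
  have cover : C.toFinset ⊆ adm.biUnion (fun P => (A P).toFinset) := by
    intro G hG
    rw [Set.mem_toFinset] at hG
    refine Finset.mem_biUnion.2 ⟨(fun i => decide (G.IsClique (π i : Set (Fin n))),
      fun j => decide (G.IsClique (π' j : Set (Fin n)))), ?_, ?_⟩
    · simp only [hadm, Finset.mem_filter, Finset.mem_univ, true_and]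
      intro i j hij
      simp [hij]
    · rw [Set.mem_toFinset]
      refine ⟨fun i => ⟨fun h => of_decide_eq_true h, fun h => ?_⟩,
        fun j => ⟨fun h => of_decide_eq_true h, fun h => ?_⟩⟩
      · rcases hG.1 i with hcl | hcl
        · exact absurd hcl (of_decide_eq_false h)
        · exact hcl
      · rcases hG.2 j with hcl | hcl
        · exact absurd hcl (of_decide_eq_false h)
        · exact hcl
  have hBn : C.ncard ≤ ∑ P ∈ adm, (A P).ncard := by
    calc C.ncard = C.toFinset.card := Set.ncard_eq_toFinset_card' C
      _ ≤ (adm.biUnion fun P => (A P).toFinset).card := Finset.card_le_card cover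
      _ ≤ ∑ P ∈ adm, (A P).toFinset.card := Finset.card_biUnion_le
      _ = ∑ P ∈ adm, (A P).ncard := by
          refine Finset.sum_congr rfl fun P _ => ?_
          exact (Set.ncard_eq_toFinset_card' (A P)).symm
  -- π' is injective
  have hπ'inj : Function.Injective π' := by
    intro a b hab
    by_contra hne
    have hd := hπ'.1 a b hne
    rw [hab] at hd
    have h2 := hπ'.2.2 b
    rw [(Finset.disjoint_self_iff_empty _).1 hd] at h2
    simp at h2
  -- the set of indices of common parts in π'
  set J : Finset (Fin k) := Finset.univ.filter (fun j => ∃ i, π i = π' j) with hJ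
  have hJl : J.card = ℓ := by
    have hset : {s : Finset (Fin n) | (∃ i, π i = s) ∧ ∃ j, π' j = s} = π' '' ↑J := by
      ext s
      simp only [Set.mem_setOf_eq, Set.mem_image, hJ, Finset.coe_filter, Finset.mem_univ,
        true_and, Set.mem_setOf_eq]
      constructor
      · rintro ⟨⟨i, hi⟩, ⟨j, hj⟩⟩
        exact ⟨j, ⟨i, hi.trans hj.symm⟩, hj⟩
      · rintro ⟨j, ⟨i, hi⟩, hj⟩
        exact ⟨⟨i, hi.trans hj⟩, ⟨j, hj⟩⟩
    rw [hℓ, hset, Set.ncard_image_of_injective _ hπ'inj, Set.ncard_coe_finset]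
  have hℓk : ℓ ≤ k := by
    rw [← hJl]
    simpa using Finset.card_le_card (Finset.subset_univ J)
  -- count admissible patterns
  have hadmcard : adm.card ≤ 2 ^ (2 * k - ℓ) := by
    have h1 : adm.card ≤ Fintype.card ((Fin k → Bool) × ({j : Fin k // j ∉ J} → Bool)) := by
      rw [← Finset.card_univ]
      apply Finset.card_le_card_of_injOn (fun P => (P.1, fun j => P.2 j.1))
        (fun _ _ => Finset.mem_univ _)
      intro P hP Q hQ hPQ
      simp only [Finset.mem_coe, hadm, Finset.mem_filter, Finset.mem_univ, true_and] at hP hQ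
      simp only [Prod.mk.injEq] at hPQ
      obtain ⟨hfst, hsnd⟩ := hPQ
      refine Prod.ext hfst (funext fun j => ?_)
      by_cases hj : j ∈ J
      · obtain ⟨i, hi⟩ := (Finset.mem_filter.1 hj).2
        rw [← hP i j hi, ← hQ i j hi, hfst]
      · exact congrFun hsnd ⟨j, hj⟩
    have h2 : Fintype.card ((Fin k → Bool) × ({j : Fin k // j ∉ J} → Bool))
        = 2 ^ k * 2 ^ (k - ℓ) := by
      rw [Fintype.card_prod, Fintype.card_fun, Fintype.card_fun, Fintype.card_bool,
        Fintype.card_fin]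
      congr 2
      rw [Fintype.card_subtype_compl]
      simp [Fintype.card_fin, hJl]
    have h3 : 2 ^ k * 2 ^ (k - ℓ) = 2 ^ (2 * k - ℓ) := by
      rw [← pow_add]
      congr 1
      omega
    omega
  -- combine
  have key : C.ncard ≤ 2 ^ (2 * k - ℓ) * I.ncard := by
    calc C.ncard ≤ ∑ P ∈ adm, (A P).ncard := hBn
      _ ≤ ∑ _P ∈ adm, I.ncard := Finset.sum_le_sum fun P _ => stepC P
      _ = adm.card * I.ncard := by rw [Finset.sum_const, smul_eq_mul]
      _ ≤ 2 ^ (2 * k - ℓ) * I.ncard := Nat.mul_le_mul_right _ hadmcard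
  show (C.ncard : ℝ) / 2 ^ n.choose 2 ≤ 2 ^ (2 * k - ℓ) * ((I.ncard : ℝ) / 2 ^ n.choose 2)
  rw [← mul_div_assoc]
  rw [div_le_div_iff_of_pos_right (by positivity)]
  exact_mod_cast key
end

section
/- Let p ∈ (0,1) be a constant, N = C(n,2), m = Np + O(1), and let x = x(n) = o(n^{4/3}). Then C(N−x, m)/C(N, m) ∼ q^x · exp(−(b−1)x²/n²) as n → ∞, where q = 1−p and b = 1/q. -/
open Filter Finset

lemma choose_ratio_prod (k M : ℕ) : ∀ X : ℕ, M + X ≤ k →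
    ((k - X).choose M : ℝ) / (k.choose M : ℝ)
      = ∏ i ∈ Finset.range X, (((k : ℝ) - i - M) / ((k : ℝ) - i)) := by
  intro X
  induction X with
  | zero =>
    intro h
    simp only [Nat.sub_zero, Finset.range_zero, Finset.prod_empty]
    rw [div_self]
    exact_mod_cast (Nat.choose_pos (by omega)).ne'
  | succ X ih =>
    intro h
    rw [Finset.prod_range_succ, ← ih (by omega)]
    have hnat : (k - (X+1)).choose M * (k - X) = (k - X).choose M * (k - X - M) := by
      have h2 := Nat.choose_mul_succ_eq (k - (X+1)) M
      have e1 : k - (X+1) + 1 = k - X := by omega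
      rw [e1] at h2
      omega
    have hc : ((k - (X+1)).choose M : ℝ) * ((k:ℝ) - X)
        = ((k - X).choose M : ℝ) * (((k:ℝ) - X) - M) := by
      have hXk : X ≤ k := by omega
      have hMkX : M ≤ k - X := by omega
      have hcast : (((k - (X+1)).choose M * (k - X) : ℕ):ℝ)
          = (((k - X).choose M * (k - X - M) : ℕ):ℝ) := by exact_mod_cast hnat
      push_cast [hXk, hMkX] at hcast
      linarith [hcast]
    have hch : (0:ℝ) < (k.choose M : ℝ) := by exact_mod_cast Nat.choose_pos (by omega)
    have hkX : (0:ℝ) < (k:ℝ) - X := by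
      have : (X:ℝ) < k := by exact_mod_cast (show X < k by omega)
      linarith
    rw [div_mul_div_comm, div_eq_div_iff hch.ne' (by positivity)]
    ring_nf
    ring_nf at hc
    nlinarith [hc, hch]

lemma gauss_sum_real (X : ℕ) : (∑ i ∈ Finset.range X, (i:ℝ)) = X*(X-1)/2 := by
  induction X with
  | zero => simp
  | succ X ih => rw [Finset.sum_range_succ, ih]; push_cast; ring

lemma pow_div_tendsto (x : ℕ → ℕ)
    (hx : Tendsto (fun n : ℕ => (x n : ℝ) / (n : ℝ) ^ ((4 : ℝ) / 3)) atTop (nhds 0))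
    (a b : ℕ) (ha : 1 ≤ a) (hab : (a:ℝ) * 4 ≤ 3 * b) :
    Tendsto (fun n : ℕ => (x n : ℝ) ^ a / (n : ℝ) ^ b) atTop (nhds 0) := by
  have hga : Tendsto (fun n : ℕ => ((x n : ℝ) / (n : ℝ) ^ ((4:ℝ)/3)) ^ a) atTop (nhds 0) := by
    have h := hx.pow a
    simpa [zero_pow (by omega : a ≠ 0)] using h
  refine squeeze_zero' ?_ ?_ hga
  · filter_upwards with n; positivity
  · filter_upwards [eventually_ge_atTop 1] with n hn
    have hn1 : (1:ℝ) ≤ (n:ℝ) := by exact_mod_cast hn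
    have h1 : ((x n:ℝ)/(n:ℝ)^((4:ℝ)/3))^a = (x n:ℝ)^a / (n:ℝ)^((4:ℝ)/3 * a) := by
      rw [div_pow, ← Real.rpow_natCast ((n:ℝ)^((4:ℝ)/3)) a, ← Real.rpow_mul (by positivity)]
    rw [h1]
    apply div_le_div_of_nonneg_left (by positivity) (by positivity)
    calc (n:ℝ)^((4:ℝ)/3*a) ≤ (n:ℝ)^((b:ℝ)) := by
          apply Real.rpow_le_rpow_of_exponent_le hn1; linarith
      _ = (n:ℝ)^b := by rw [Real.rpow_natCast]




set_option maxHeartbeats 1000000 in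
lemma bound_lemma (p C nn Nn d : ℝ) (X : ℕ) (hp0 : 0 < p) (hp1 : p < 1) (hC0 : 0 ≤ C)
    (hnn : 2 ≤ nn) (hNn : nn^2/4 ≤ Nn) (hNn2 : Nn = nn*(nn-1)/2)
    (hX : (X:ℝ) ≤ nn^2/8) (hd : |d| ≤ C)
    (hT : (C + p*X)*8/((1-p)*nn^2) ≤ 1/2) :
    |(∑ i ∈ Finset.range X, Real.log ((Nn - (Nn*p + d) - i)/((1-p)*(Nn - i)))) + p/(1-p)*(X:ℝ)^2/nn^2|
      ≤ (X:ℝ)*(2*((C + p*X)*8/((1-p)*nn^2))^2) + (X:ℝ)*((C+p*X)*(X:ℝ)*32/((1-p)*nn^4))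
        + (p/(1-p)*(2*(X:ℝ)/nn^2 + 2*(X:ℝ)^2/nn^3) + (X:ℝ)*C*4/((1-p)*nn^2)) := by
  have hq : (0:ℝ) < 1 - p := by linarith
  have hnn0 : (0:ℝ) < nn := by linarith
  have hNn0 : (0:ℝ) < Nn := by nlinarith
  have hNX : nn^2/8 ≤ Nn - X := by nlinarith
  have hNX0 : (0:ℝ) < Nn - X := by nlinarith
  set T : ℝ := (C + p*X)*8/((1-p)*nn^2) with hT_def
  have hT0 : (0:ℝ) ≤ T := by positivity
  set t : ℕ → ℝ := fun i => (d + p*(i:ℝ))/((1-p)*(Nn - i)) with ht_def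
  set u : ℕ → ℝ := fun i => (d + p*(i:ℝ))/((1-p)*Nn) with hu_def
  have hiX : ∀ i ∈ Finset.range X, (i:ℝ) ≤ (X:ℝ) := by
    intro i hi
    exact_mod_cast (Finset.mem_range.mp hi).le
  have hnum : ∀ i ∈ Finset.range X, |d + p*(i:ℝ)| ≤ C + p*X := by
    intro i hi
    have h2 := hiX i hi
    calc |d + p*(i:ℝ)| ≤ |d| + |p*(i:ℝ)| := abs_add_le _ _
      _ ≤ C + p*X := by
          rw [abs_of_nonneg (by positivity : (0:ℝ) ≤ p*(i:ℝ))]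
          have : p*(i:ℝ) ≤ p*(X:ℝ) := by nlinarith
          linarith
  have hden : ∀ i ∈ Finset.range X, (1-p)*(Nn - X) ≤ (1-p)*(Nn - i) := by
    intro i hi
    have := hiX i hi
    nlinarith
  have hdenpos : (0:ℝ) < (1-p)*(Nn - X) := by positivity
  have hNni : ∀ i ∈ Finset.range X, (0:ℝ) < Nn - i := by
    intro i hi
    have h1 := hden i hi
    nlinarith
  have ht_le : ∀ i ∈ Finset.range X, |t i| ≤ T := by
    intro i hi
    have h1 : |t i| = |d + p*(i:ℝ)| / ((1-p)*(Nn - i)) := by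
      rw [ht_def, abs_div, abs_of_pos (lt_of_lt_of_le hdenpos (hden i hi))]
    rw [h1, hT_def]
    calc |d + p*(i:ℝ)| / ((1-p)*(Nn - i)) ≤ (C + p*X) / ((1-p)*(nn^2/8)) := by
          apply div_le_div₀ (by positivity) (hnum i hi) (by positivity)
          calc (1-p)*(nn^2/8) ≤ (1-p)*(Nn - X) := by nlinarith
            _ ≤ (1-p)*(Nn - i) := hden i hi
      _ = (C + p*X)*8/((1-p)*nn^2) := by
          rw [div_eq_div_iff (by positivity) (by positivity)]; ring
  have hlog : ∀ i ∈ Finset.range X, |Real.log (1 - t i) + t i| ≤ 2*T^2 := by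
    intro i hi
    have habs : |t i| ≤ T := ht_le i hi
    have h12 : |t i| ≤ 1/2 := habs.trans hT
    have h1 : |t i| < 1 := lt_of_le_of_lt h12 (by norm_num)
    have h2 := Real.abs_log_sub_add_sum_range_le h1 1
    norm_num at h2
    rw [add_comm]
    calc |t i + Real.log (1 - t i)| ≤ (t i)^2/(1 - |t i|) := h2
      _ ≤ T^2/(1/2) := by
          apply div_le_div₀ (by positivity) ?_ (by norm_num) (by linarith)
          nlinarith [sq_abs (t i), abs_nonneg (t i)]
      _ = 2*T^2 := by ring
  have hid : ∀ i ∈ Finset.range X,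
      Real.log ((Nn - (Nn*p + d) - i)/((1-p)*(Nn - i))) = Real.log (1 - t i) := by
    intro i hi
    congr 1
    have hne : (1-p)*(Nn - i) ≠ 0 := (lt_of_lt_of_le hdenpos (hden i hi)).ne'
    have hNi0 : Nn - (i:ℝ) ≠ 0 := (hNni i hi).ne'
    rw [ht_def]
    field_simp
    ring
  have hut : ∀ i ∈ Finset.range X, |u i - t i| ≤ (C+p*X)*(X:ℝ)*32/((1-p)*nn^4) := by
    intro i hi
    have hNi := hNni i hi
    have heq : u i - t i = -((d + p*(i:ℝ))*(i:ℝ)/((1-p)*Nn*(Nn - i))) := by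
      rw [hu_def, ht_def]
      field_simp
      ring
    rw [heq, abs_neg, abs_div, abs_of_pos (by positivity : (0:ℝ) < (1-p)*Nn*(Nn - i))]
    calc |(d + p*(i:ℝ))*(i:ℝ)| / ((1-p)*Nn*(Nn - i))
        ≤ ((C+p*X)*(X:ℝ)) / ((1-p)*(nn^2/4)*(nn^2/8)) := by
          apply div_le_div₀ (by positivity) ?_ (by positivity) ?_
          · rw [abs_mul, abs_of_nonneg (by positivity : (0:ℝ) ≤ (i:ℝ))]
            exact mul_le_mul (hnum i hi) (hiX i hi) (by positivity) (by positivity)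
          · have hNni' : nn^2/8 ≤ Nn - (i:ℝ) := by linarith [hiX i hi]
            calc (1-p)*(nn^2/4)*(nn^2/8) ≤ ((1-p)*Nn)*(Nn - (i:ℝ)) := by
                  apply mul_le_mul ?_ hNni' (by positivity) (by positivity)
                  exact mul_le_mul_of_nonneg_left hNn hq.le
              _ = (1-p)*Nn*(Nn - (i:ℝ)) := by ring
      _ = (C+p*X)*(X:ℝ)*32/((1-p)*nn^4) := by
          rw [div_eq_div_iff (by positivity) (by positivity)]; ring
  have hsumu : ∑ i ∈ Finset.range X, u i = ((X:ℝ)*d + p*((X:ℝ)*((X:ℝ)-1)/2))/((1-p)*Nn) := by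
    rw [hu_def, ← Finset.sum_div]
    congr 1
    rw [Finset.sum_add_distrib, Finset.sum_const, Finset.card_range, ← Finset.mul_sum,
      gauss_sum_real, nsmul_eq_mul]
  have hnn1 : (0:ℝ) < nn - 1 := by linarith
  have h3 : |p/(1-p)*(X:ℝ)^2/nn^2 - ∑ i ∈ Finset.range X, u i|
      ≤ p/(1-p)*(2*(X:ℝ)/nn^2 + 2*(X:ℝ)^2/nn^3) + (X:ℝ)*C*4/((1-p)*nn^2) := by
    rw [hsumu]
    have split : p/(1-p)*(X:ℝ)^2/nn^2 - ((X:ℝ)*d + p*((X:ℝ)*((X:ℝ)-1)/2))/((1-p)*Nn)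
        = p/(1-p)*((X:ℝ)*(nn-(X:ℝ))/(nn^2*(nn-1))) - (X:ℝ)*d/((1-p)*Nn) := by
      rw [hNn2]
      field_simp
      ring
    rw [split]
    have hA : |p/(1-p)*((X:ℝ)*(nn-(X:ℝ))/(nn^2*(nn-1)))|
        ≤ p/(1-p)*(2*(X:ℝ)/nn^2 + 2*(X:ℝ)^2/nn^3) := by
      rw [abs_mul, abs_of_pos (by positivity : (0:ℝ) < p/(1-p))]
      apply mul_le_mul_of_nonneg_left ?_ (by positivity)
      rw [abs_div, abs_of_pos (by positivity : (0:ℝ) < nn^2*(nn-1))]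
      calc |(X:ℝ)*(nn-(X:ℝ))|/(nn^2*(nn-1)) ≤ ((X:ℝ)*(nn+(X:ℝ)))/(nn^3/2) := by
            apply div_le_div₀ (by positivity) ?_ (by positivity) (by nlinarith)
            rw [abs_mul, abs_of_nonneg (by positivity : (0:ℝ) ≤ (X:ℝ))]
            apply mul_le_mul_of_nonneg_left ?_ (by positivity)
            calc |nn - (X:ℝ)| ≤ |nn| + |(X:ℝ)| := abs_sub _ _
              _ = nn + (X:ℝ) := by
                  rw [abs_of_pos hnn0, abs_of_nonneg (by positivity : (0:ℝ) ≤ (X:ℝ))]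
        _ = 2*(X:ℝ)/nn^2 + 2*(X:ℝ)^2/nn^3 := by
            field_simp
    have hB : |(X:ℝ)*d/((1-p)*Nn)| ≤ (X:ℝ)*C*4/((1-p)*nn^2) := by
      rw [abs_div, abs_of_pos (by positivity : (0:ℝ) < (1-p)*Nn), abs_mul,
        abs_of_nonneg (by positivity : (0:ℝ) ≤ (X:ℝ))]
      calc (X:ℝ)*|d|/((1-p)*Nn) ≤ ((X:ℝ)*C)/((1-p)*(nn^2/4)) := by
            apply div_le_div₀ (by positivity) ?_ (by positivity) (by nlinarith)
            exact mul_le_mul_of_nonneg_left hd (by positivity)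
        _ = (X:ℝ)*C*4/((1-p)*nn^2) := by
            rw [div_eq_div_iff (by positivity) (by positivity)]; ring
    calc |p/(1-p)*((X:ℝ)*(nn-(X:ℝ))/(nn^2*(nn-1))) - (X:ℝ)*d/((1-p)*Nn)|
        ≤ |p/(1-p)*((X:ℝ)*(nn-(X:ℝ))/(nn^2*(nn-1)))| + |(X:ℝ)*d/((1-p)*Nn)| := abs_sub _ _
      _ ≤ _ := add_le_add hA hB
  have habs1 : |∑ i ∈ Finset.range X, (Real.log (1 - t i) + t i)| ≤ (X:ℝ)*(2*T^2) := by
    calc |∑ i ∈ Finset.range X, (Real.log (1 - t i) + t i)|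
        ≤ ∑ i ∈ Finset.range X, |Real.log (1 - t i) + t i| := Finset.abs_sum_le_sum_abs _ _
      _ ≤ (Finset.range X).card • (2*T^2) := Finset.sum_le_card_nsmul _ _ _ hlog
      _ = (X:ℝ)*(2*T^2) := by simp [Finset.card_range, nsmul_eq_mul]
  have habs2 : |∑ i ∈ Finset.range X, (u i - t i)| ≤ (X:ℝ)*((C+p*X)*(X:ℝ)*32/((1-p)*nn^4)) := by
    calc |∑ i ∈ Finset.range X, (u i - t i)|
        ≤ ∑ i ∈ Finset.range X, |u i - t i| := Finset.abs_sum_le_sum_abs _ _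
      _ ≤ (Finset.range X).card • ((C+p*X)*(X:ℝ)*32/((1-p)*nn^4)) :=
          Finset.sum_le_card_nsmul _ _ _ hut
      _ = (X:ℝ)*((C+p*X)*(X:ℝ)*32/((1-p)*nn^4)) := by simp [Finset.card_range, nsmul_eq_mul]
  have hdecomp :
      (∑ i ∈ Finset.range X, Real.log ((Nn - (Nn*p + d) - i)/((1-p)*(Nn - i)))) + p/(1-p)*(X:ℝ)^2/nn^2
      = (∑ i ∈ Finset.range X, (Real.log (1 - t i) + t i)) + (∑ i ∈ Finset.range X, (u i - t i))
        + (p/(1-p)*(X:ℝ)^2/nn^2 - ∑ i ∈ Finset.range X, u i) := by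
    rw [Finset.sum_congr rfl hid, Finset.sum_add_distrib, Finset.sum_sub_distrib]
    ring
  rw [hdecomp]
  calc |(∑ i ∈ Finset.range X, (Real.log (1 - t i) + t i)) + (∑ i ∈ Finset.range X, (u i - t i))
        + (p/(1-p)*(X:ℝ)^2/nn^2 - ∑ i ∈ Finset.range X, u i)|
      ≤ |(∑ i ∈ Finset.range X, (Real.log (1 - t i) + t i)) + (∑ i ∈ Finset.range X, (u i - t i))|
        + |p/(1-p)*(X:ℝ)^2/nn^2 - ∑ i ∈ Finset.range X, u i| := abs_add_le _ _
    _ ≤ |∑ i ∈ Finset.range X, (Real.log (1 - t i) + t i)| + |∑ i ∈ Finset.range X, (u i - t i)|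
        + |p/(1-p)*(X:ℝ)^2/nn^2 - ∑ i ∈ Finset.range X, u i| := by
        have := abs_add_le (∑ i ∈ Finset.range X, (Real.log (1 - t i) + t i))
          (∑ i ∈ Finset.range X, (u i - t i))
        linarith
    _ ≤ _ := by
        have := add_le_add (add_le_add habs1 habs2) h3
        linarith


noncomputable def Sfun (p : ℝ) (m x : ℕ → ℕ) (n : ℕ) : ℝ :=
  ∑ i ∈ Finset.range (x n),
    Real.log (((n.choose 2:ℝ) - (m n:ℝ) - i)/((1-p)*((n.choose 2:ℝ) - i)))

noncomputable def Efun (p : ℝ) (x : ℕ → ℕ) (n : ℕ) : ℝ := p/(1-p)*(x n:ℝ)^2/(n:ℝ)^2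

set_option maxHeartbeats 1000000 in
/-- Lemma 3.7 of Heckel–Panagiotou: if `p ∈ (0,1)` is constant, `N = C(n,2)`,
`m = Np + O(1)` and `x = o(n^{4/3})`, then
`C(N−x, m)/C(N, m) ∼ q^x · exp(−(b−1)x²/n²)` where `q = 1−p`, `b = 1/q`. -/
theorem binomial_ratio_asymptotic (p : ℝ) (hp : p ∈ Set.Ioo (0 : ℝ) 1)
    (m x : ℕ → ℕ)
    (hm : ∃ C : ℝ, ∀ n : ℕ, |(m n : ℝ) - (n.choose 2 : ℝ) * p| ≤ C)
    (hx : Tendsto (fun n : ℕ => (x n : ℝ) / (n : ℝ) ^ ((4 : ℝ) / 3)) atTop (nhds 0)) :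
    Tendsto (fun n : ℕ =>
        (((n.choose 2 - x n).choose (m n) : ℝ) / ((n.choose 2).choose (m n) : ℝ)) /
          ((1 - p) ^ x n *
            Real.exp (-(1 / (1 - p) - 1) * (x n : ℝ) ^ 2 / (n : ℝ) ^ 2)))
      atTop (nhds 1) := by
  obtain ⟨hp0, hp1⟩ := hp
  obtain ⟨C, hC⟩ := hm
  have hq : (0:ℝ) < 1 - p := by linarith
  have hC0 : (0:ℝ) ≤ C := le_trans (abs_nonneg _) (hC 0)
  have key := pow_div_tendsto x hx
  have L14 := key 1 4 (by norm_num) (by norm_num)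
  have L24 := key 2 4 (by norm_num) (by norm_num)
  have L34 := key 3 4 (by norm_num) (by norm_num)
  have L23 := key 2 3 (by norm_num) (by norm_num)
  have L12 := key 1 2 (by norm_num) (by norm_num)
  have L12' : Tendsto (fun n : ℕ => (x n:ℝ)/(n:ℝ)^2) atTop (nhds 0) := by
    simpa using L12
  -- limit of the bound function
  have hB0 : Tendsto (fun n : ℕ =>
      (x n:ℝ)*(2*((C + p*(x n:ℝ))*8/((1-p)*(n:ℝ)^2))^2)
        + (x n:ℝ)*((C+p*(x n:ℝ))*(x n:ℝ)*32/((1-p)*(n:ℝ)^4))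
        + (p/(1-p)*(2*(x n:ℝ)/(n:ℝ)^2 + 2*(x n:ℝ)^2/(n:ℝ)^3)
            + (x n:ℝ)*C*4/((1-p)*(n:ℝ)^2))) atTop (nhds 0) := by
    have hlin : Tendsto (fun n : ℕ =>
        (128*C^2/(1-p)^2)*((x n:ℝ)^1/(n:ℝ)^4)
          + (256*C*p/(1-p)^2)*((x n:ℝ)^2/(n:ℝ)^4)
          + (128*p^2/(1-p)^2)*((x n:ℝ)^3/(n:ℝ)^4)
          + (32*C/(1-p))*((x n:ℝ)^2/(n:ℝ)^4)
          + (32*p/(1-p))*((x n:ℝ)^3/(n:ℝ)^4)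
          + (2*p/(1-p) + 4*C/(1-p))*((x n:ℝ)^1/(n:ℝ)^2)
          + (2*p/(1-p))*((x n:ℝ)^2/(n:ℝ)^3)) atTop (nhds 0) := by
      have h := ((((((L14.const_mul (128*C^2/(1-p)^2)).add
        (L24.const_mul (256*C*p/(1-p)^2))).add
        (L34.const_mul (128*p^2/(1-p)^2))).add
        (L24.const_mul (32*C/(1-p)))).add
        (L34.const_mul (32*p/(1-p)))).add
        (L12.const_mul (2*p/(1-p) + 4*C/(1-p)))).add
        (L23.const_mul (2*p/(1-p)))
      simpa using h
    apply hlin.congr'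
    filter_upwards [eventually_ge_atTop 1] with n hn
    have hn0 : (n:ℝ) ≠ 0 := Nat.cast_ne_zero.mpr (by omega)
    field_simp
    ring
  -- eventual facts
  have heN : ∀ᶠ n : ℕ in atTop,
      (n:ℝ)^2/4 ≤ (n.choose 2:ℝ) ∧ (n.choose 2:ℝ) = (n:ℝ)*((n:ℝ)-1)/2 ∧ (2:ℝ) ≤ (n:ℝ) := by
    filter_upwards [eventually_ge_atTop 2] with n hn
    have h2 : (2:ℝ) ≤ (n:ℝ) := by exact_mod_cast hn
    have hch : (n.choose 2 : ℝ) = (n:ℝ)*((n:ℝ)-1)/2 := Nat.cast_choose_two (K := ℝ) n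
    refine ⟨?_, hch, h2⟩
    rw [hch]; nlinarith
  have heX : ∀ᶠ n : ℕ in atTop, (x n:ℝ)/(n:ℝ)^2 < min (1/8) ((1-p)/16) := by
    apply L12'.eventually_lt_const
    apply lt_min (by norm_num) (by positivity)
  have heC : ∀ᶠ n : ℕ in atTop, C ≤ (1-p)/16*(n:ℝ)^2 := by
    have h1 : Tendsto (fun n : ℕ => (1-p)/16*(n:ℝ)^2) atTop atTop := by
      apply Tendsto.const_mul_atTop (by positivity)
      exact (tendsto_pow_atTop (by norm_num)).comp tendsto_natCast_atTop_atTop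
    exact h1.eventually_ge_atTop C
  have heT : ∀ᶠ n : ℕ in atTop, (C + p*(x n:ℝ))*8/((1-p)*(n:ℝ)^2) ≤ 1/2 := by
    have ha : Tendsto (fun n : ℕ => ((n:ℝ)^2)⁻¹) atTop (nhds 0) :=
      ((tendsto_pow_atTop (by norm_num)).comp tendsto_natCast_atTop_atTop).inv_tendsto_atTop
    have h1 : Tendsto (fun n : ℕ =>
        (8*C/(1-p))*((n:ℝ)^2)⁻¹ + (8*p/(1-p))*((x n:ℝ)/(n:ℝ)^2)) atTop (nhds 0) := by
      have := (ha.const_mul (8*C/(1-p))).add (L12'.const_mul (8*p/(1-p)))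
      simpa using this
    have h2 := h1.eventually_le_const (show (0:ℝ) < 1/2 by norm_num)
    filter_upwards [h2, eventually_ge_atTop 1] with n h2 hn
    have hn0 : (n:ℝ) ≠ 0 := Nat.cast_ne_zero.mpr (by omega)
    have heq : (C + p*(x n:ℝ))*8/((1-p)*(n:ℝ)^2)
        = (8*C/(1-p))*((n:ℝ)^2)⁻¹ + (8*p/(1-p))*((x n:ℝ)/(n:ℝ)^2) := by
      field_simp
    rw [heq]; exact h2
  -- main analytic limit
  have hmain : Tendsto (fun n : ℕ => Sfun p m x n + Efun p x n) atTop (nhds 0) := by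
    apply squeeze_zero_norm' ?_ hB0
    filter_upwards [heN, heX, heT] with n hN hX8 hT
    obtain ⟨hN4, hN2, hn2⟩ := hN
    have hn2sq : (0:ℝ) < (n:ℝ)^2 := by nlinarith
    have hXle : (x n:ℝ) ≤ (n:ℝ)^2/8 := by
      have h1 : (x n:ℝ)/(n:ℝ)^2 ≤ 1/8 := le_trans hX8.le (min_le_left _ _)
      rw [div_le_iff₀ hn2sq] at h1
      linarith
    have happ := bound_lemma p C (n:ℝ) (n.choose 2:ℝ) ((m n:ℝ) - (n.choose 2:ℝ)*p) (x n)
      hp0 hp1 hC0 hn2 hN4 hN2 hXle (hC n) hT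
    have hrw : ∀ i : ℕ,
        ((n.choose 2:ℝ) - ((n.choose 2:ℝ)*p + ((m n:ℝ) - (n.choose 2:ℝ)*p)) - (i:ℝ))
          = ((n.choose 2:ℝ) - (m n:ℝ) - (i:ℝ)) := fun i => by ring
    simp only [hrw] at happ
    rw [Real.norm_eq_abs]
    exact happ
  -- eventual equality with exp (S + E)
  have heq : ∀ᶠ n : ℕ in atTop,
      (((n.choose 2 - x n).choose (m n) : ℝ) / ((n.choose 2).choose (m n) : ℝ)) /
          ((1 - p) ^ x n *
            Real.exp (-(1 / (1 - p) - 1) * (x n : ℝ) ^ 2 / (n : ℝ) ^ 2))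
        = Real.exp (Sfun p m x n + Efun p x n) := by
    filter_upwards [heN, heX, heC] with n hN hX8 hC16
    obtain ⟨hN4, hN2, hn2⟩ := hN
    have hn2sq : (0:ℝ) < (n:ℝ)^2 := by nlinarith
    have hXq : (x n:ℝ) < (1-p)/16*(n:ℝ)^2 := by
      have h1 : (x n:ℝ)/(n:ℝ)^2 < (1-p)/16 := lt_of_lt_of_le hX8 (min_le_right _ _)
      rw [div_lt_iff₀ hn2sq] at h1
      linarith [h1]
    have hm_le : (m n:ℝ) ≤ (n.choose 2:ℝ)*p + C := by
      have := abs_le.mp (hC n)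
      linarith [this.2]
    have hCX : C + (x n:ℝ) < (n.choose 2:ℝ)*(1-p) := by
      have h1 : (1-p)/16*(n:ℝ)^2 + (1-p)/16*(n:ℝ)^2 ≤ (1-p)*((n:ℝ)^2/4) := by nlinarith
      have h2 : (1-p)*((n:ℝ)^2/4) ≤ (1-p)*(n.choose 2:ℝ) := by nlinarith
      nlinarith
    have hmxR : ((m n : ℕ):ℝ) + ((x n : ℕ):ℝ) < (n.choose 2:ℝ) := by
      have hsplit : (n.choose 2:ℝ)*p + (n.choose 2:ℝ)*(1-p) = (n.choose 2:ℝ) := by ring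
      linarith
    have hmx : m n + x n ≤ n.choose 2 := by
      have : ((m n + x n : ℕ):ℝ) < ((n.choose 2 : ℕ):ℝ) := by push_cast; linarith
      exact (Nat.cast_lt.mp this).le
    have hfac1 : ∀ i ∈ Finset.range (x n), (0:ℝ) < (n.choose 2:ℝ) - (m n:ℝ) - (i:ℝ) := by
      intro i hi
      have : (i:ℝ) < (x n:ℝ) := by exact_mod_cast Finset.mem_range.mp hi
      linarith
    have hfac2 : ∀ i ∈ Finset.range (x n), (0:ℝ) < (n.choose 2:ℝ) - (i:ℝ) := by
      intro i hi
      have h1 : (i:ℝ) < (x n:ℝ) := by exact_mod_cast Finset.mem_range.mp hi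
      have h2 : (0:ℝ) ≤ (m n:ℝ) := Nat.cast_nonneg _
      linarith [hfac1 i hi]
    rw [choose_ratio_prod (n.choose 2) (m n) (x n) hmx]
    have hexp : -(1 / (1 - p) - 1) * (x n : ℝ) ^ 2 / (n : ℝ) ^ 2 = -(Efun p x n) := by
      rw [Efun]
      field_simp
      try ring
    rw [hexp, Real.exp_neg, Real.exp_add]
    have hprod : (∏ i ∈ Finset.range (x n),
          (((n.choose 2:ℝ) - (i:ℝ) - (m n:ℝ))/((n.choose 2:ℝ) - (i:ℝ)))) / (1-p)^(x n)
        = Real.exp (Sfun p m x n) := by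
      rw [Sfun, Real.exp_sum]
      rw [show ((1-p):ℝ)^(x n) = ∏ _i ∈ Finset.range (x n), (1-p) by
        rw [Finset.prod_const, Finset.card_range]]
      rw [← Finset.prod_div_distrib]
      apply Finset.prod_congr rfl
      intro i hi
      rw [Real.exp_log (div_pos (hfac1 i hi) (mul_pos hq (hfac2 i hi)))]
      rw [div_div]
      ring
    rw [div_mul_eq_div_div, hprod, div_eq_mul_inv, inv_inv]
  -- conclude
  have hcomp : Tendsto (fun n : ℕ => Real.exp (Sfun p m x n + Efun p x n)) atTop (nhds 1) := by
    have h := (Real.continuous_exp.tendsto 0).comp hmain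
    simpa [Function.comp_def] using h
  exact hcomp.congr' (EventuallyEq.symm heq)
end

section
/- Let X_k count ordered colourings with profile k in G(n,1/2) and X_k^co count ordered cocolourings with profile k, with k₁ = 0 and k = Σ_u k_u parts. Then E[(X_k^co)²] ≤ 2^{2k} · E[X_k²]. -/
open Finset

/-- `kk` is a `k`-profile on `[n]`: `Σ_u kk u = k`, `Σ_u u·kk u ≤ n`,
supported on sizes `1 ≤ u ≤ n`. -/
def IsProfile (n k : ℕ) (kk : ℕ → ℕ) : Prop :=
  (∑ u ∈ Icc 1 n, kk u = k) ∧ (∑ u ∈ Icc 1 n, u * kk u ≤ n) ∧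
    ∀ u, u ∉ Icc 1 n → kk u = 0

/-- `π` is an ordered partial partition of `[n]` with profile `kk`: pairwise disjoint
parts, decreasing in size, with exactly `kk u` parts of size `u` for every `u`. -/
def HasProfile (n k : ℕ) (kk : ℕ → ℕ) (π : Fin k → Finset (Fin n)) : Prop :=
  (∀ i j, i ≠ j → Disjoint (π i) (π j)) ∧
    (∀ i j, i ≤ j → (π j).card ≤ (π i).card) ∧
    ∀ u, Set.ncard {i : Fin k | (π i).card = u} = kk u

/-- The number of ordered partial partitions with profile `kk` all of whose parts are
independent sets of `G`. -/
noncomputable def numColourings (n k : ℕ) (kk : ℕ → ℕ) (G : SimpleGraph (Fin n)) : ℕ :=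
  Set.ncard {π : Fin k → Finset (Fin n) |
    HasProfile n k kk π ∧ ∀ i, Gᶜ.IsClique (π i : Set (Fin n))}

/-- The number of ordered partial partitions with profile `kk` all of whose parts are
cliques or independent sets of `G`. -/
noncomputable def numCocolourings (n k : ℕ) (kk : ℕ → ℕ) (G : SimpleGraph (Fin n)) : ℕ :=
  Set.ncard {π : Fin k → Finset (Fin n) |
    HasProfile n k kk π ∧
      ∀ i, G.IsClique (π i : Set (Fin n)) ∨ Gᶜ.IsClique (π i : Set (Fin n))}

open Classical

/-- Which parts of `π` are cliques of `G`. -/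
noncomputable def epsOf {n k : ℕ} (G : SimpleGraph (Fin n)) (π : Fin k → Finset (Fin n)) :
    Fin k → Bool := fun i => decide (G.IsClique (π i : Set (Fin n)))

/-- The graph of pairs lying inside a `true` part of `π` or of `π'`. -/
def flipGraph {n k : ℕ} (π π' : Fin k → Finset (Fin n)) (ε ε' : Fin k → Bool) :
    SimpleGraph (Fin n) :=
  SimpleGraph.fromRel (fun x y =>
    (∃ i, ε i = true ∧ x ∈ π i ∧ y ∈ π i) ∨ (∃ i, ε' i = true ∧ x ∈ π' i ∧ y ∈ π' i))

lemma flipGraph_comm {n k : ℕ} (π π' : Fin k → Finset (Fin n)) (ε ε' : Fin k → Bool) :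
    flipGraph π π' ε ε' = flipGraph π' π ε' ε := by
  unfold flipGraph
  congr 1
  funext x y
  exact propext or_comm

lemma flip_indep {n k : ℕ} (G : SimpleGraph (Fin n)) (π π' : Fin k → Finset (Fin n))
    (hd : ∀ i j, i ≠ j → Disjoint (π i) (π j))
    (hc : ∀ i, G.IsClique (π i : Set (Fin n)) ∨ Gᶜ.IsClique (π i : Set (Fin n)))
    (hc' : ∀ i, G.IsClique (π' i : Set (Fin n)) ∨ Gᶜ.IsClique (π' i : Set (Fin n)))
    (i : Fin k) :
    (symmDiff G (flipGraph π π' (epsOf G π) (epsOf G π')))ᶜ.IsClique (π i : Set (Fin n)) := by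
  set H := flipGraph π π' (epsOf G π) (epsOf G π') with hH
  intro x hx y hy hxy
  simp only [Finset.mem_coe] at hx hy
  rw [SimpleGraph.compl_adj]
  refine ⟨hxy, ?_⟩
  have hadj : (symmDiff G H).Adj x y ↔
      ((G.Adj x y ∧ ¬ H.Adj x y) ∨ (H.Adj x y ∧ ¬ G.Adj x y)) := by
    rw [symmDiff_def]; simp [SimpleGraph.sup_adj, SimpleGraph.sdiff_adj]
  rw [hadj]
  by_cases hcl : G.IsClique (π i : Set (Fin n))
  · -- clique part: edge present in both G and H
    have hG : G.Adj x y := hcl hx hy hxy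
    have hHxy : H.Adj x y := by
      rw [hH, flipGraph, SimpleGraph.fromRel_adj]
      refine ⟨hxy, Or.inl (Or.inl ⟨i, ?_, hx, hy⟩)⟩
      simp [epsOf, hcl]
    tauto
  · -- independent part: edge absent in both G and H
    have hind : Gᶜ.IsClique (π i : Set (Fin n)) := (hc i).resolve_left hcl
    have hG : ¬ G.Adj x y := ((hind hx hy hxy).2)
    have hHxy : ¬ H.Adj x y := by
      rw [hH, flipGraph, SimpleGraph.fromRel_adj]
      rintro ⟨-, h | h⟩ <;>
      · obtain ⟨j, hj, h1, h2⟩ | ⟨j, hj, h1, h2⟩ := h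
        · -- x, y in π j with ε j = true
          rcases eq_or_ne i j with rfl | hij
          · simp [epsOf, hcl] at hj
          · have hxPj : x ∈ π j := by first | exact h1 | exact h2
            exact absurd hxPj (Finset.disjoint_left.1 (hd i j hij) hx)
        · -- x, y in a clique part of π'
          have hclj : G.IsClique (π' j : Set (Fin n)) := by simpa [epsOf] using hj
          first
            | exact hG (hclj h1 h2 hxy)
            | exact hG (G.adj_symm (hclj h1 h2 (Ne.symm hxy)))
    tauto

open Classical in
lemma key_count (n k : ℕ) (kk : ℕ → ℕ) :
    (∑ G : SimpleGraph (Fin n), numCocolourings n k kk G ^ 2) ≤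
      2 ^ (2 * k) * ∑ G : SimpleGraph (Fin n), numColourings n k kk G ^ 2 := by
  classical
  set A : SimpleGraph (Fin n) → Finset (Fin k → Finset (Fin n)) :=
    fun G => univ.filter (fun π => HasProfile n k kk π ∧
      ∀ i, G.IsClique (π i : Set (Fin n)) ∨ Gᶜ.IsClique (π i : Set (Fin n))) with hA
  set B : SimpleGraph (Fin n) → Finset (Fin k → Finset (Fin n)) :=
    fun G => univ.filter (fun π => HasProfile n k kk π ∧
      ∀ i, Gᶜ.IsClique (π i : Set (Fin n))) with hB
  have hAcard : ∀ G, numCocolourings n k kk G = (A G).card := by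
    intro G
    rw [numCocolourings, ← Set.ncard_coe_finset]
    congr 1
    ext π
    simp [hA]
  have hBcard : ∀ G, numColourings n k kk G = (B G).card := by
    intro G
    rw [numColourings, ← Set.ncard_coe_finset]
    congr 1
    ext π
    simp [hB]
  have hL : (∑ G : SimpleGraph (Fin n), numCocolourings n k kk G ^ 2) =
      (univ.sigma (fun G : SimpleGraph (Fin n) => A G ×ˢ A G)).card := by
    rw [Finset.card_sigma]
    exact Finset.sum_congr rfl fun G _ => by rw [hAcard, Finset.card_product, sq]
  have hR : 2 ^ (2 * k) * (∑ G : SimpleGraph (Fin n), numColourings n k kk G ^ 2) =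
      ((univ : Finset ((Fin k → Bool) × (Fin k → Bool))) ×ˢ
        univ.sigma (fun G : SimpleGraph (Fin n) => B G ×ˢ B G)).card := by
    rw [Finset.card_product, Finset.card_sigma]
    congr 1
    · simp [two_mul, pow_add]
    · exact (Finset.sum_congr rfl fun G _ => by rw [hBcard, Finset.card_product, sq]).symm
  rw [hL, hR]
  apply Finset.card_le_card_of_injOn
    (fun a => ((epsOf a.1 a.2.1, epsOf a.1 a.2.2),
      ⟨symmDiff a.1 (flipGraph a.2.1 a.2.2 (epsOf a.1 a.2.1) (epsOf a.1 a.2.2)), a.2⟩))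
  · rintro ⟨G, π, π'⟩ ha
    rw [Finset.mem_coe, Finset.mem_sigma, Finset.mem_product] at ha
    obtain ⟨-, h1, h2⟩ := ha
    rw [hA, Finset.mem_filter] at h1 h2
    obtain ⟨-, hp1, hc1⟩ := h1
    obtain ⟨-, hp2, hc2⟩ := h2
    rw [Finset.mem_coe, Finset.mem_product]
    refine ⟨Finset.mem_univ _, ?_⟩
    rw [Finset.mem_sigma]
    refine ⟨Finset.mem_univ _, ?_⟩
    rw [Finset.mem_product, hB, Finset.mem_filter, Finset.mem_filter]
    refine ⟨⟨Finset.mem_univ _, hp1, fun i => flip_indep G π π' hp1.1 hc1 hc2 i⟩,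
      ⟨Finset.mem_univ _, hp2, fun i => ?_⟩⟩
    have := flip_indep G π' π hp2.1 hc2 hc1 i
    rwa [flipGraph_comm] at this
  · rintro ⟨G, π, π'⟩ - ⟨G', σ, σ'⟩ - hab
    simp only [Prod.mk.injEq, Sigma.mk.inj_iff] at hab
    obtain ⟨⟨he1, he2⟩, hg, hpair⟩ := hab
    have hpair' : (π, π') = (σ, σ') := eq_of_heq hpair
    have hπ : π = σ := congrArg Prod.fst hpair'
    have hπ' : π' = σ' := congrArg Prod.snd hpair'
    subst hπ; subst hπ'
    have hG : G = G' := by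
      have := congrArg (fun X => symmDiff X (flipGraph π π' (epsOf G π) (epsOf G π'))) hg
      rw [symmDiff_symmDiff_cancel_right, he1, he2, symmDiff_symmDiff_cancel_right] at this
      exact this
    subst hG
    rfl

/-- `E[(X_k^co)²] ≤ 2^{2k} · E[X_k²]` for a profile with no singleton parts. -/
theorem second_moment_cocolourings_le (n k : ℕ) (kk : ℕ → ℕ) (h : IsProfile n k kk)
    (h1 : kk 1 = 0) :
    (∑ G : SimpleGraph (Fin n), (numCocolourings n k kk G : ℝ) ^ 2) / 2 ^ n.choose 2 ≤
      2 ^ (2 * k) *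
        ((∑ G : SimpleGraph (Fin n), (numColourings n k kk G : ℝ) ^ 2) / 2 ^ n.choose 2) := by
  have key := key_count n k kk
  have hcast : (∑ G : SimpleGraph (Fin n), (numCocolourings n k kk G : ℝ) ^ 2) ≤
      2 ^ (2 * k) * ∑ G : SimpleGraph (Fin n), (numColourings n k kk G : ℝ) ^ 2 := by
    exact_mod_cast key
  rw [← mul_div_assoc]
  have h2 : (0:ℝ) < 2 ^ n.choose 2 := by positivity
  exact div_le_div_of_nonneg_right hcast h2.le
end
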